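/- McCarty realizability validates the union axiom: there is a natural number e such that for all trees a in the realizability universe, e realizes ∃x ∀y (y ε x ↔ ∃z ε a, y ε z). -/

import Mathlib

/-- Kleene application: evaluate the partial recursive function with code `n` at `m`. -/
def kapp (n m : ℕ) : Part ℕ := (Denumerable.ofNat Nat.Partrec.Code n).eval m

/-- McCarty's realizability universe: well-founded trees `sup(S)` where `S` is a
set of pairs `(m, v)` with `m ∈ ℕ` and `v` a tree (presented by an indexed family). -/
inductive V : Type 1
  | sup : (I : Type) → (I → ℕ × V) → V

/-- The set of labelled edges into (the root of) a tree. -/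
def V.E : V → Set (ℕ × V)
  | V.sup _ t => Set.range t

mutual
  /-- `RMem n x w`: `n ⊩ x ε w`, i.e. there is `(m, v) ∈ E(w)` with `n₀ = m` and
  `n₁ ⊩ x = v`. -/
  inductive RMem : ℕ → V → V → Prop
    | intro (n : ℕ) (x w v : V) (h : (n.unpair.1, v) ∈ w.E)
        (h2 : REq n.unpair.2 x v) : RMem n x w
  /-- `REq n w w'`: `n ⊩ w = w'`, i.e. for all `(m, v) ∈ E(w)`, `n₀(m)` is defined and
  `n₀(m) ⊩ v ε w'`, and for all `(m', v') ∈ E(w')`, `n₁(m')` is defined and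
  `n₁(m') ⊩ v' ε w`. -/
  inductive REq : ℕ → V → V → Prop
    | intro (n : ℕ) (w w' : V)
        (d1 : ∀ m v, (m, v) ∈ w.E → (kapp n.unpair.1 m).Dom)
        (h1 : ∀ m v (h : (m, v) ∈ w.E),
          RMem ((kapp n.unpair.1 m).get (d1 m v h)) v w')
        (d2 : ∀ m' v', (m', v') ∈ w'.E → (kapp n.unpair.2 m').Dom)
        (h2 : ∀ m' v' (h : (m', v') ∈ w'.E),
          RMem ((kapp n.unpair.2 m').get (d2 m' v' h)) v' w) :
        REq n w w'
end

-- Auxiliary definitions and lemmas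

theorem V.ind {motive : V → Prop}
    (sup : ∀ (I : Type) (t : I → ℕ × V), (∀ j, motive (t j).2) → motive (V.sup I t)) :
    ∀ v, motive v :=
  fun v => V.rec (motive_1 := motive) (motive_2 := fun p => motive p.2)
    sup (fun _ _ hv => hv) v

@[simp] theorem V.E_sup (I : Type) (t : I → ℕ × V) : (V.sup I t).E = Set.range t := rfl

theorem kapp_encode (c : Nat.Partrec.Code) (m : ℕ) :
    kapp (Encodable.encode c) m = c.eval m := by
  unfold kapp; rw [Denumerable.ofNat_encode]

theorem kapp_partrec : Partrec₂ kapp :=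
  Nat.Partrec.Code.eval_part.comp ((Computable.ofNat _).comp Computable.fst) Computable.snd

theorem RMem.mk' (m r : ℕ) (x w v : V) (h : (m, v) ∈ w.E) (h2 : REq r x v) :
    RMem (Nat.pair m r) x w :=
  RMem.intro _ x w v (by simpa using h) (by simpa using h2)

theorem RMem.elim' {n : ℕ} {x w : V} (h : RMem n x w) :
    ∃ v, (n.unpair.1, v) ∈ w.E ∧ REq n.unpair.2 x v := by
  cases h with | intro n x w v h h2 => exact ⟨v, h, h2⟩

theorem REq.left {n : ℕ} {w w' : V} (h : REq n w w') :
    ∀ m v, (m, v) ∈ w.E → ∃ r, r ∈ kapp n.unpair.1 m ∧ RMem r v w' := by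
  cases h with
  | intro n w w' d1 h1 d2 h2 =>
      exact fun m v hm => ⟨_, Part.get_mem (d1 m v hm), h1 m v hm⟩

theorem REq.right {n : ℕ} {w w' : V} (h : REq n w w') :
    ∀ m' v', (m', v') ∈ w'.E → ∃ r, r ∈ kapp n.unpair.2 m' ∧ RMem r v' w := by
  cases h with
  | intro n w w' d1 h1 d2 h2 =>
      exact fun m v hm => ⟨_, Part.get_mem (d2 m v hm), h2 m v hm⟩

theorem REq.mk' (n : ℕ) (w w' : V)
    (H1 : ∀ m v, (m, v) ∈ w.E → ∃ r, r ∈ kapp n.unpair.1 m ∧ RMem r v w')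
    (H2 : ∀ m' v', (m', v') ∈ w'.E → ∃ r, r ∈ kapp n.unpair.2 m' ∧ RMem r v' w) :
    REq n w w' := by
  choose f hf hf2 using H1
  choose g hg hg2 using H2
  refine REq.intro n w w'
    (fun m v h => Part.dom_iff_mem.2 ⟨_, hf m v h⟩) (fun m v h => ?_)
    (fun m v h => Part.dom_iff_mem.2 ⟨_, hg m v h⟩) (fun m v h => ?_)
  · rw [Part.get_eq_of_mem (hf m v h)]; exact hf2 m v h
  · rw [Part.get_eq_of_mem (hg m v h)]; exact hg2 m v h

theorem exists_refl : ∃ i : ℕ, ∀ v : V, REq i v v := by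
  have hcomp : Partrec₂ (fun (c : Nat.Partrec.Code) (m : ℕ) =>
      (Part.some (Nat.pair m (Nat.pair (Encodable.encode c) (Encodable.encode c))) : Part ℕ)) := by
    have : Computable fun p : Nat.Partrec.Code × ℕ =>
        Nat.pair p.2 (Nat.pair (Encodable.encode p.1) (Encodable.encode p.1)) :=
      Primrec.to_comp (Primrec₂.natPair.comp Primrec.snd
        (Primrec₂.natPair.comp (Primrec.encode.comp Primrec.fst)
          (Primrec.encode.comp Primrec.fst)))
    exact this.partrec
  obtain ⟨c, hc⟩ := Nat.Partrec.Code.fixed_point₂ hcomp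
  refine ⟨Nat.pair (Encodable.encode c) (Encodable.encode c), ?_⟩
  have hi : ∀ m, kapp (Encodable.encode c) m =
      Part.some (Nat.pair m (Nat.pair (Encodable.encode c) (Encodable.encode c))) := by
    intro m; rw [kapp_encode, hc]
  intro v
  induction v using V.ind with
  | sup I f IH =>
    apply REq.mk'
    · intro m u hm
      refine ⟨Nat.pair m (Nat.pair (Encodable.encode c) (Encodable.encode c)), ?_, ?_⟩
      · rw [Nat.unpair_pair, hi m]; exact Part.mem_some _
      · have hm' := hm
        obtain ⟨j, hj⟩ := hm
        have h2 := IH j; rw [hj] at h2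
        exact RMem.mk' m _ u (V.sup I f) u hm' h2
    · intro m u hm
      refine ⟨Nat.pair m (Nat.pair (Encodable.encode c) (Encodable.encode c)), ?_, ?_⟩
      · rw [Nat.unpair_pair, hi m]; exact Part.mem_some _
      · have hm' := hm
        obtain ⟨j, hj⟩ := hm
        have h2 := IH j; rw [hj] at h2
        exact RMem.mk' m _ u (V.sup I f) u hm' h2

private theorem pu1 : Primrec fun n : ℕ => n.unpair.1 := Primrec.fst.comp Primrec.unpair
private theorem pu2 : Primrec fun n : ℕ => n.unpair.2 := Primrec.snd.comp Primrec.unpair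

theorem exists_trans : ∃ (E : ℕ) (t : ℕ → ℕ → ℕ),
    (∀ n, kapp E n = Part.some (t n.unpair.1 n.unpair.2)) ∧
    (∀ p q m, kapp (t p q).unpair.1 m =
      (kapp p.unpair.1 m).bind fun x => (kapp q.unpair.1 x.unpair.1).bind fun y =>
        (kapp E (Nat.pair x.unpair.2 y.unpair.2)).map fun z => Nat.pair y.unpair.1 z) ∧
    (∀ p q m, kapp (t p q).unpair.2 m =
      (kapp q.unpair.2 m).bind fun y => (kapp p.unpair.2 y.unpair.1).bind fun x =>
        (kapp E (Nat.pair y.unpair.2 x.unpair.2)).map fun z => Nat.pair x.unpair.1 z) := by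
  have hfL : Partrec (fun n =>
      (kapp n.unpair.1.unpair.2.unpair.1.unpair.1 n.unpair.2).bind fun x =>
        (kapp n.unpair.1.unpair.2.unpair.2.unpair.1 x.unpair.1).bind fun y =>
          (kapp n.unpair.1.unpair.1 (Nat.pair x.unpair.2 y.unpair.2)).map fun z =>
            Nat.pair y.unpair.1 z : ℕ →. ℕ) := by
    apply Partrec.bind
    · exact kapp_partrec.comp (Primrec.to_comp (pu1.comp (pu1.comp (pu2.comp pu1))))
        (Primrec.to_comp pu2)
    apply Partrec.bind
    · exact kapp_partrec.comp
        (Primrec.to_comp ((pu1.comp (pu2.comp (pu2.comp pu1))).comp Primrec.fst))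
        (Primrec.to_comp (pu1.comp Primrec.snd))
    apply Partrec.map
    · exact kapp_partrec.comp
        (Primrec.to_comp ((pu1.comp pu1).comp (Primrec.fst.comp Primrec.fst)))
        (Primrec.to_comp (Primrec₂.natPair.comp (pu2.comp (Primrec.snd.comp Primrec.fst))
          (pu2.comp Primrec.snd)))
    · exact Primrec.to_comp (Primrec₂.natPair.comp
        (pu1.comp (Primrec.snd.comp Primrec.fst)) Primrec.snd)
  have hfR : Partrec (fun n =>
      (kapp n.unpair.1.unpair.2.unpair.2.unpair.2 n.unpair.2).bind fun y =>
        (kapp n.unpair.1.unpair.2.unpair.1.unpair.2 y.unpair.1).bind fun x =>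
          (kapp n.unpair.1.unpair.1 (Nat.pair y.unpair.2 x.unpair.2)).map fun z =>
            Nat.pair x.unpair.1 z : ℕ →. ℕ) := by
    apply Partrec.bind
    · exact kapp_partrec.comp (Primrec.to_comp (pu2.comp (pu2.comp (pu2.comp pu1))))
        (Primrec.to_comp pu2)
    apply Partrec.bind
    · exact kapp_partrec.comp
        (Primrec.to_comp ((pu2.comp (pu1.comp (pu2.comp pu1))).comp Primrec.fst))
        (Primrec.to_comp (pu1.comp Primrec.snd))
    apply Partrec.map
    · exact kapp_partrec.comp
        (Primrec.to_comp ((pu1.comp pu1).comp (Primrec.fst.comp Primrec.fst)))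
        (Primrec.to_comp (Primrec₂.natPair.comp (pu2.comp (Primrec.snd.comp Primrec.fst))
          (pu2.comp Primrec.snd)))
    · exact Primrec.to_comp (Primrec₂.natPair.comp
        (pu1.comp (Primrec.snd.comp Primrec.fst)) Primrec.snd)
  obtain ⟨cL, hcL⟩ := Nat.Partrec.Code.exists_code.1 (Partrec.nat_iff.1 hfL)
  obtain ⟨cR, hcR⟩ := Nat.Partrec.Code.exists_code.1 (Partrec.nat_iff.1 hfR)
  have hF : Partrec₂ (fun (c : Nat.Partrec.Code) (pq : ℕ) =>
      (Part.some (Nat.pair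
        (Encodable.encode (cL.curry (Nat.pair (Encodable.encode c) pq)))
        (Encodable.encode (cR.curry (Nat.pair (Encodable.encode c) pq)))) : Part ℕ)) := by
    have : Computable fun p : Nat.Partrec.Code × ℕ =>
        Nat.pair (Encodable.encode (cL.curry (Nat.pair (Encodable.encode p.1) p.2)))
          (Encodable.encode (cR.curry (Nat.pair (Encodable.encode p.1) p.2))) :=
      Primrec.to_comp (Primrec₂.natPair.comp
        (Primrec.encode.comp (Nat.Partrec.Code.primrec₂_curry.comp (Primrec.const cL)
          (Primrec₂.natPair.comp (Primrec.encode.comp Primrec.fst) Primrec.snd)))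
        (Primrec.encode.comp (Nat.Partrec.Code.primrec₂_curry.comp (Primrec.const cR)
          (Primrec₂.natPair.comp (Primrec.encode.comp Primrec.fst) Primrec.snd))))
    exact this.partrec
  obtain ⟨c, hc⟩ := Nat.Partrec.Code.fixed_point₂ hF
  refine ⟨Encodable.encode c, fun p q =>
    Nat.pair
      (Encodable.encode (cL.curry (Nat.pair (Encodable.encode c) (Nat.pair p q))))
      (Encodable.encode (cR.curry (Nat.pair (Encodable.encode c) (Nat.pair p q)))),
    ?_, ?_, ?_⟩
  · intro n
    rw [kapp_encode, hc]
    simp [Nat.pair_unpair]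
  · intro p q m
    rw [Nat.unpair_pair, kapp_encode, Nat.Partrec.Code.eval_curry, hcL]
    simp only [Nat.unpair_pair]
  · intro p q m
    rw [Nat.unpair_pair, kapp_encode, Nat.Partrec.Code.eval_curry, hcR]
    simp only [Nat.unpair_pair]

theorem trans_spec {E : ℕ} {t : ℕ → ℕ → ℕ}
    (hE : ∀ n, kapp E n = Part.some (t n.unpair.1 n.unpair.2))
    (hL : ∀ p q m, kapp (t p q).unpair.1 m =
      (kapp p.unpair.1 m).bind fun x => (kapp q.unpair.1 x.unpair.1).bind fun y =>
        (kapp E (Nat.pair x.unpair.2 y.unpair.2)).map fun z => Nat.pair y.unpair.1 z)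
    (hR : ∀ p q m, kapp (t p q).unpair.2 m =
      (kapp q.unpair.2 m).bind fun y => (kapp p.unpair.2 y.unpair.1).bind fun x =>
        (kapp E (Nat.pair y.unpair.2 x.unpair.2)).map fun z => Nat.pair x.unpair.1 z) :
    ∀ a c : V, (∀ b p q, REq p a b → REq q b c → REq (t p q) a c) ∧
      (∀ b p q, REq p c b → REq q b a → REq (t p q) c a) := by
  intro a
  induction a using V.ind with
  | sup I f IH =>
    intro c
    constructor
    · -- Q (sup I f) c
      intro b p q hp hq
      apply REq.mk'
      · intro m v hm
        obtain ⟨x, hx, hxm⟩ := hp.left m v hm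
        obtain ⟨v', hv', hx1⟩ := hxm.elim'
        obtain ⟨y, hy, hym⟩ := hq.left x.unpair.1 v' hv'
        obtain ⟨v'', hv'', hy1⟩ := hym.elim'
        refine ⟨Nat.pair y.unpair.1 (t x.unpair.2 y.unpair.2), ?_, ?_⟩
        · rw [hL]
          simp only [Part.mem_bind_iff, Part.mem_map_iff]
          exact ⟨x, hx, y, hy, t x.unpair.2 y.unpair.2,
            by rw [hE]; simp [Part.mem_some_iff], rfl⟩
        · obtain ⟨j, hj⟩ := hm
          have hQ := (IH j v'').1 v' x.unpair.2 y.unpair.2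
          rw [hj] at hQ
          exact RMem.mk' _ _ v c v'' hv'' (hQ hx1 hy1)
      · intro m' w hm'
        obtain ⟨y, hy, hym⟩ := hq.right m' w hm'
        obtain ⟨u', hu', hy1⟩ := hym.elim'
        obtain ⟨x, hx, hxm⟩ := hp.right y.unpair.1 u' hu'
        obtain ⟨u, hu, hx1⟩ := hxm.elim'
        refine ⟨Nat.pair x.unpair.1 (t y.unpair.2 x.unpair.2), ?_, ?_⟩
        · rw [hR]
          simp only [Part.mem_bind_iff, Part.mem_map_iff]
          exact ⟨y, hy, x, hx, t y.unpair.2 x.unpair.2,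
            by rw [hE]; simp [Part.mem_some_iff], rfl⟩
        · have hu2 := hu
          obtain ⟨j, hj⟩ := hu
          have hQ := (IH j w).2 u' y.unpair.2 x.unpair.2
          rw [hj] at hQ
          exact RMem.mk' _ _ w (V.sup I f) u hu2 (hQ hy1 hx1)
    · -- Q c (sup I f)
      intro b p q hp hq
      apply REq.mk'
      · intro m w hm
        obtain ⟨x, hx, hxm⟩ := hp.left m w hm
        obtain ⟨u', hu', hx1⟩ := hxm.elim'
        obtain ⟨y, hy, hym⟩ := hq.left x.unpair.1 u' hu'
        obtain ⟨u, hu, hy1⟩ := hym.elim'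
        refine ⟨Nat.pair y.unpair.1 (t x.unpair.2 y.unpair.2), ?_, ?_⟩
        · rw [hL]
          simp only [Part.mem_bind_iff, Part.mem_map_iff]
          exact ⟨x, hx, y, hy, t x.unpair.2 y.unpair.2,
            by rw [hE]; simp [Part.mem_some_iff], rfl⟩
        · have hu2 := hu
          obtain ⟨j, hj⟩ := hu
          have hQ := (IH j w).2 u' x.unpair.2 y.unpair.2
          rw [hj] at hQ
          exact RMem.mk' _ _ w (V.sup I f) u hu2 (hQ hx1 hy1)
      · intro m' u hm'
        obtain ⟨y, hy, hym⟩ := hq.right m' u hm'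
        obtain ⟨u', hu', hy1⟩ := hym.elim'
        obtain ⟨x, hx, hxm⟩ := hp.right y.unpair.1 u' hu'
        obtain ⟨w, hw, hx1⟩ := hxm.elim'
        refine ⟨Nat.pair x.unpair.1 (t y.unpair.2 x.unpair.2), ?_, ?_⟩
        · rw [hR]
          simp only [Part.mem_bind_iff, Part.mem_map_iff]
          exact ⟨y, hy, x, hx, t y.unpair.2 x.unpair.2,
            by rw [hE]; simp [Part.mem_some_iff], rfl⟩
        · obtain ⟨j, hj⟩ := hm'
          have hQ := (IH j w).1 u' y.unpair.2 x.unpair.2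
          rw [hj] at hQ
          exact RMem.mk' _ _ u c w hw (hQ hy1 hx1)

def V.func : V → (Σ I : Type, I → ℕ × V)
  | V.sup I t => ⟨I, t⟩

theorem V.E_func (v : V) : v.E = Set.range v.func.2 := by cases v; rfl

def V.union (a : V) : V :=
  V.sup (Σ j : a.func.1, ((a.func.2 j).2).func.1)
    (fun jk => (Nat.pair (a.func.2 jk.1).1 ((((a.func.2 jk.1).2).func.2 jk.2)).1,
      ((((a.func.2 jk.1).2).func.2 jk.2)).2))

theorem mem_union_E {a : V} {n : ℕ} {u : V} :
    (n, u) ∈ (V.union a).E ↔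
      ∃ m v k, (m, v) ∈ a.E ∧ (k, u) ∈ v.E ∧ n = Nat.pair m k := by
  constructor
  · rintro ⟨⟨j, k⟩, hjk⟩
    have hn : Nat.pair (a.func.2 j).1 ((((a.func.2 j).2).func.2 k)).1 = n :=
      congrArg Prod.fst hjk
    have hu : ((((a.func.2 j).2).func.2 k)).2 = u := congrArg Prod.snd hjk
    refine ⟨(a.func.2 j).1, (a.func.2 j).2, ((((a.func.2 j).2).func.2 k)).1, ?_, ?_, hn.symm⟩
    · rw [V.E_func]; exact ⟨j, rfl⟩
    · rw [V.E_func]; exact ⟨k, by rw [← hu]⟩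
  · rintro ⟨m, v, k, hmv, hku, rfl⟩
    rw [V.E_func] at hmv hku
    obtain ⟨j, hj⟩ := hmv
    obtain ⟨kk, hk⟩ := hku
    have h2 : (a.func.2 j).2 = v := congrArg Prod.snd hj
    subst h2
    refine ⟨⟨j, kk⟩, ?_⟩
    show (Nat.pair (a.func.2 j).1 _, _) = _
    rw [hk]
    have h1 : (a.func.2 j).1 = m := congrArg Prod.fst hj
    rw [h1]

/-- Kleene realizability of an implication between two abstractly realized statements:
`n ⊩ φ → ψ` iff for every `m ⊩ φ`, `n(m)` is defined and `n(m) ⊩ ψ`. -/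
def RImp (P Q : ℕ → Prop) (n : ℕ) : Prop :=
  ∀ m, P m → ∃ k, k ∈ kapp n m ∧ Q k

/-- McCarty realizability validates the union axiom: there is `e` such that for all
trees `a`, `e` realizes `∃x ∀y (y ε x ↔ ∃z ε a, y ε z)` (uniform quantifiers; a
realizer of `∃z ε a, y ε z` is a pair of a realizer of `z ε a` and one of `y ε z`). -/
theorem union_realized :
    ∃ e : ℕ, ∀ a : V, ∃ x : V, ∀ y : V,
      RImp (fun m => RMem m y x)
        (fun k => ∃ z : V, RMem k.unpair.1 z a ∧ RMem k.unpair.2 y z) e.unpair.1 ∧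
      RImp (fun k => ∃ z : V, RMem k.unpair.1 z a ∧ RMem k.unpair.2 y z)
        (fun m => RMem m y x) e.unpair.2 := by
  obtain ⟨i, hrefl⟩ := exists_refl
  obtain ⟨E, t, hE, hL, hR⟩ := exists_trans
  have htr : ∀ p q (x y z : V), REq p x y → REq q y z → REq (t p q) x z :=
    fun p q x y z h1 h2 => ((trans_spec hE hL hR x z).1) y p q h1 h2
  -- code for the forward direction
  have hf1 : Partrec ((fun m => Nat.pair (Nat.pair m.unpair.1.unpair.1 i)
      (Nat.pair m.unpair.1.unpair.2 m.unpair.2) : ℕ → ℕ) : ℕ →. ℕ) :=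
    Computable.partrec (Primrec.to_comp
      (Primrec₂.natPair.comp (Primrec₂.natPair.comp (pu1.comp pu1) (Primrec.const i))
        (Primrec₂.natPair.comp (pu2.comp pu1) pu2)))
  obtain ⟨c1, hc1⟩ := Nat.Partrec.Code.exists_code.1 (Partrec.nat_iff.1 hf1)
  -- code for the backward direction
  have hf2 : Partrec (fun k =>
      (kapp k.unpair.1.unpair.2.unpair.1 k.unpair.2.unpair.1).bind fun x =>
        (kapp E (Nat.pair k.unpair.2.unpair.2 x.unpair.2)).map fun z =>
          Nat.pair (Nat.pair k.unpair.1.unpair.1 x.unpair.1) z : ℕ →. ℕ) := by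
    apply Partrec.bind
    · exact kapp_partrec.comp (Primrec.to_comp (pu1.comp (pu2.comp pu1)))
        (Primrec.to_comp (pu1.comp pu2))
    apply Partrec.map
    · exact kapp_partrec.comp (Computable.const E)
        (Primrec.to_comp (Primrec₂.natPair.comp (pu2.comp (pu2.comp Primrec.fst))
          (pu2.comp Primrec.snd)))
    · exact Primrec.to_comp (Primrec₂.natPair.comp
        (Primrec₂.natPair.comp (pu1.comp (pu1.comp (Primrec.fst.comp Primrec.fst)))
          (pu1.comp (Primrec.snd.comp Primrec.fst))) Primrec.snd)
  obtain ⟨c2, hc2⟩ := Nat.Partrec.Code.exists_code.1 (Partrec.nat_iff.1 hf2)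
  refine ⟨Nat.pair (Encodable.encode c1) (Encodable.encode c2), fun a => ⟨V.union a, fun y => ⟨?_, ?_⟩⟩⟩
  · -- forward
    intro m hm
    obtain ⟨u', hu', hy⟩ := hm.elim'
    obtain ⟨m', v, k', hva, hku, hn⟩ := mem_union_E.mp hu'
    refine ⟨Nat.pair (Nat.pair m' i) (Nat.pair k' m.unpair.2), ?_, ?_⟩
    · rw [Nat.unpair_pair, kapp_encode, hc1]
      have : (Nat.pair (Nat.pair m.unpair.1.unpair.1 i)
          (Nat.pair m.unpair.1.unpair.2 m.unpair.2)) =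
          Nat.pair (Nat.pair m' i) (Nat.pair k' m.unpair.2) := by
        rw [hn, Nat.unpair_pair]
      exact this ▸ Part.mem_some _
    · refine ⟨v, ?_, ?_⟩
      · rw [Nat.unpair_pair]
        exact RMem.mk' m' i v a v hva (hrefl v)
      · rw [Nat.unpair_pair]
        exact RMem.mk' k' _ y v u' hku hy
  · -- backward
    intro k hk
    obtain ⟨z, hz, hyz⟩ := hk
    obtain ⟨v, hva, hp⟩ := hz.elim'
    obtain ⟨u, huz, hq⟩ := hyz.elim'
    obtain ⟨x, hx, hxm⟩ := hp.left k.unpair.2.unpair.1 u huz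
    obtain ⟨u', hu', hx1⟩ := hxm.elim'
    refine ⟨Nat.pair (Nat.pair k.unpair.1.unpair.1 x.unpair.1)
      (t k.unpair.2.unpair.2 x.unpair.2), ?_, ?_⟩
    · rw [Nat.unpair_pair, kapp_encode, hc2]
      simp only [Part.mem_bind_iff, Part.mem_map_iff]
      exact ⟨x, hx, t k.unpair.2.unpair.2 x.unpair.2,
        by rw [hE]; simp [Part.mem_some_iff], rfl⟩
    · exact RMem.mk' _ _ y (V.union a) u'
        (mem_union_E.mpr ⟨k.unpair.1.unpair.1, v, x.unpair.1, hva, hu', rfl⟩)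
        (htr _ _ y u u' hq hx1)
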